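/- Generation lemma for basis terms: for any context Γ, type T and basis term b, if Γ ⊢ b : T, then there exist unit types U₁,…,Uₙ and scalars α₁,…,αₙ such that T ≡ Σᵢ₌₁ⁿ αᵢ·Uᵢ, Γ ⊢ b : Uᵢ for each i ∈ {1,…,n}, and Σᵢ₌₁ⁿ αᵢ = 1. -/

import Mathlib

/- Types of λvec_R: general types and unit types (mutual) -/
mutual
inductive UTy (S : Type) : Type where
  | uvar : ℕ → UTy S
  | arrow : UTy S → Ty S → UTy S
  | fallU : ℕ → UTy S → UTy S
  | fallG : ℕ → UTy S → UTy S
inductive Ty (S : Type) : Type where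
  | unit : UTy S → Ty S
  | smul : S → Ty S → Ty S
  | add : Ty S → Ty S → Ty S
  | gvar : ℕ → Ty S
end

/- Type equivalence: the smallest congruence with the weak-module axioms -/
mutual
inductive UEquiv {S : Type} [CommRing S] : UTy S → UTy S → Prop where
  | refl (U : UTy S) : UEquiv U U
  | symm : UEquiv U V → UEquiv V U
  | trans : UEquiv U V → UEquiv V W → UEquiv U W
  | arrow : UEquiv U V → TEquiv T R → UEquiv (.arrow U T) (.arrow V R)
  | fallU : UEquiv U V → UEquiv (.fallU X U) (.fallU X V)
  | fallG : UEquiv U V → UEquiv (.fallG X U) (.fallG X V)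
inductive TEquiv {S : Type} [CommRing S] : Ty S → Ty S → Prop where
  | refl (T : Ty S) : TEquiv T T
  | symm : TEquiv T R → TEquiv R T
  | trans : TEquiv T R → TEquiv R P → TEquiv T P
  | unit : UEquiv U V → TEquiv (.unit U) (.unit V)
  | smul : TEquiv T R → TEquiv (.smul a T) (.smul a R)
  | addL : TEquiv T R → TEquiv (.add T P) (.add R P)
  | addR : TEquiv T R → TEquiv (.add P T) (.add P R)
  | one_smul (T : Ty S) : TEquiv (.smul 1 T) T
  | smul_smul : TEquiv (.smul a (.smul b T)) (.smul (a*b) T)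
  | smul_add : TEquiv (.add (.smul a T) (.smul a R)) (.smul a (.add T R))
  | add_smul : TEquiv (.add (.smul a T) (.smul b T)) (.smul (a+b) T)
  | comm : TEquiv (.add T R) (.add R T)
  | assoc : TEquiv (.add T (.add R P)) (.add (.add T R) P)
end

/- substitution of a unit type variable by a unit type -/
mutual
def UTy.substU {S : Type} : UTy S → ℕ → UTy S → UTy S
  | .uvar m, X, A => if m = X then A else .uvar m
  | .arrow U T, X, A => .arrow (U.substU X A) (T.substU X A)
  | .fallU m U, X, A => if m = X then .fallU m U else .fallU m (U.substU X A)
  | .fallG m U, X, A => .fallG m (U.substU X A)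
def Ty.substU {S : Type} : Ty S → ℕ → UTy S → Ty S
  | .unit U, X, A => .unit (U.substU X A)
  | .smul a T, X, A => .smul a (T.substU X A)
  | .add T R, X, A => .add (T.substU X A) (R.substU X A)
  | .gvar m, _, _ => .gvar m
end

/- substitution of a general type variable by a general type -/
mutual
def UTy.substG {S : Type} : UTy S → ℕ → Ty S → UTy S
  | .uvar m, _, _ => .uvar m
  | .arrow U T, X, A => .arrow (U.substG X A) (T.substG X A)
  | .fallU m U, X, A => .fallU m (U.substG X A)
  | .fallG m U, X, A => if m = X then .fallG m U else .fallG m (U.substG X A)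
def Ty.substG {S : Type} : Ty S → ℕ → Ty S → Ty S
  | .unit U, X, A => .unit (U.substG X A)
  | .smul a T, X, A => .smul a (T.substG X A)
  | .add T R, X, A => .add (T.substG X A) (R.substG X A)
  | .gvar m, X, A => if m = X then A else .gvar m
end

/- free type variables; a variable is (false, n) for a unit variable X_n
   and (true, n) for a general variable 𝕏_n -/
mutual
def UTy.fv {S : Type} : UTy S → Set (Bool × ℕ)
  | .uvar n => {(false, n)}
  | .arrow U T => U.fv ∪ T.fv
  | .fallU n U => U.fv \ {(false, n)}
  | .fallG n U => U.fv \ {(true, n)}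
def Ty.fv {S : Type} : Ty S → Set (Bool × ℕ)
  | .unit U => U.fv
  | .smul _ T => T.fv
  | .add T R => T.fv ∪ R.fv
  | .gvar n => {(true, n)}
end
/- a single substitution item: a type variable together with a type of the matching kind -/
inductive TSub (S : Type) : Type where
  | u : ℕ → UTy S → TSub S
  | g : ℕ → Ty S → TSub S

def TSub.var {S : Type} : TSub S → Bool × ℕ
  | .u X _ => (false, X)
  | .g X _ => (true, X)

def Ty.applySub {S : Type} : Ty S → TSub S → Ty S
  | T, .u X A => T.substU X A
  | T, .g X A => T.substG X A

def UTy.applySub {S : Type} : UTy S → TSub S → UTy S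
  | U, .u X A => U.substU X A
  | U, .g X A => U.substG X A

def Ty.applySubs {S : Type} (T : Ty S) (σ : List (TSub S)) : Ty S := σ.foldl Ty.applySub T
def UTy.applySubs {S : Type} (U : UTy S) (σ : List (TSub S)) : UTy S := σ.foldl UTy.applySub U

/- ∀X.U for a variable of either kind, and iterated foralls -/
def mkForall {S : Type} (X : Bool × ℕ) (U : UTy S) : UTy S :=
  if X.1 then .fallG X.2 U else .fallU X.2 U
def mkForalls {S : Type} (Xs : List (Bool × ℕ)) (U : UTy S) : UTy S := Xs.foldr mkForall U

/- the linear combination Σᵢ αᵢ·Tᵢ represented by a (nonempty) list of pairs -/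
def combo {S : Type} : List (S × Ty S) → Ty S
  | [] => .gvar 0
  | [p] => .smul p.1 p.2
  | p :: q :: L => .add (.smul p.1 p.2) (combo (q :: L))

/- sum of the scalars of a linear combination -/
def weightOf {S : Type} [CommRing S] {α : Type} (L : List (S × α)) : S := (L.map Prod.fst).sum

/- Terms of λvec_R -/
inductive Term (S : Type) : Type where
  | var : ℕ → Term S
  | lam : ℕ → Term S → Term S
  | app : Term S → Term S → Term S
  | smul : S → Term S → Term S
  | add : Term S → Term S → Term S

/- basis terms: variables and abstractions -/
inductive IsBasis {S : Type} : Term S → Prop where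
  | var : IsBasis (.var x)
  | lam : IsBasis (.lam x t)

def Term.fv {S : Type} : Term S → Set ℕ
  | .var x => {x}
  | .lam x t => t.fv \ {x}
  | .app t r => t.fv ∪ r.fv
  | .smul _ t => t.fv
  | .add t r => t.fv ∪ r.fv

/- term substitution t[b/x] -/
def Term.subst {S : Type} : Term S → ℕ → Term S → Term S
  | .var y, x, b => if y = x then b else .var y
  | .lam y t, x, b => if y = x then .lam y t else .lam y (t.subst x b)
  | .app t r, x, b => .app (t.subst x b) (r.subst x b)
  | .smul a t, x, b => .smul a (t.subst x b)
  | .add t r, x, b => .add (t.subst x b) (r.subst x b)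

/- typing contexts: partial maps from term variables to unit types -/
def Ctx (S : Type) : Type := ℕ → Option (UTy S)

def Ctx.update {S : Type} (Γ : Ctx S) (x : ℕ) (U : UTy S) : Ctx S :=
  fun y => if y = x then some U else Γ y

def Ctx.fv {S : Type} (Γ : Ctx S) : Set (Bool × ℕ) :=
  {v | ∃ x U, Γ x = some U ∧ v ∈ UTy.fv U}

def Ctx.applySub {S : Type} (Γ : Ctx S) (s : TSub S) : Ctx S :=
  fun x => (Γ x).map (fun U => U.applySub s)
/- Sized typing judgement: `TypesN n Γ t T` means Γ ⊢ t : T has a derivation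
   with n sequents. -/
inductive TypesN {S : Type} [CommRing S] : ℕ → Ctx S → Term S → Ty S → Prop where
  | ax : Γ x = some U → TypesN 1 Γ (.var x) (.unit U)
  | equiv : TypesN n Γ t T → TEquiv T R → TypesN (n+1) Γ t R
  | arrI : TypesN n (Γ.update x U) t T → TypesN (n+1) Γ (.lam x t) (.unit (.arrow U T))
  | arrE (Xs : List (Bool × ℕ)) (U : UTy S) (L : List (S × Ty S)) (M : List (S × List (TSub S))) :
      L ≠ [] → M ≠ [] →
      (∀ q ∈ M, q.2.map TSub.var = Xs) →
      TypesN n Γ t (combo (L.map fun p => (p.1, Ty.unit (mkForalls Xs (.arrow U p.2))))) →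
      TypesN m Γ r (combo (M.map fun q => (q.1, (Ty.unit U).applySubs q.2))) →
      TypesN (n+m+1) Γ (.app t r)
        (combo (L.flatMap fun p => M.map fun q => (p.1 * q.1, p.2.applySubs q.2)))
  | fallI (L : List (S × UTy S)) (X : Bool × ℕ) :
      L ≠ [] → X ∉ Γ.fv →
      TypesN n Γ t (combo (L.map fun p => (p.1, Ty.unit p.2))) →
      TypesN (n+1) Γ t (combo (L.map fun p => (p.1, Ty.unit (mkForall X p.2))))
  | fallE (L : List (S × UTy S)) (s : TSub S) :
      L ≠ [] →
      TypesN n Γ t (combo (L.map fun p => (p.1, Ty.unit (mkForall s.var p.2)))) →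
      TypesN (n+1) Γ t (combo (L.map fun p => (p.1, (Ty.unit p.2).applySub s)))
  | addI : TypesN n Γ t T → TypesN m Γ r R → TypesN (n+m+1) Γ (.add t r) (.add T R)
  | oneE : TypesN n Γ (.smul 1 t) T → TypesN (n+1) Γ t T
  | sum (L : List (ℕ × S × Ty S)) :
      L ≠ [] →
      (∀ p ∈ L, TypesN p.1 Γ t p.2.2) →
      TypesN ((L.map Prod.fst).sum + 1) Γ (.smul (weightOf (L.map Prod.snd)) t)
        (combo (L.map Prod.snd))

/- the typing judgement Γ ⊢ t : T -/
def Types {S : Type} [CommRing S] (Γ : Ctx S) (t : Term S) (T : Ty S) : Prop :=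
  ∃ n, TypesN n Γ t T

/- the relation ≺_{X,Γ} -/
inductive Prec {S : Type} [CommRing S] (Γ : Ctx S) : (Bool × ℕ) → Ty S → Ty S → Prop where
  | intro (X : Bool × ℕ) (L : List (S × UTy S)) :
      X ∉ Γ.fv → L ≠ [] →
      TEquiv R (combo (L.map fun p => (p.1, Ty.unit p.2))) →
      TEquiv T (combo (L.map fun p => (p.1, Ty.unit (mkForall X p.2)))) →
      Prec Γ X R T
  | elim (s : TSub S) (L : List (S × UTy S)) :
      s.var ∉ Γ.fv → L ≠ [] →
      TEquiv R (combo (L.map fun p => (p.1, Ty.unit (mkForall s.var p.2)))) →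
      TEquiv T (combo (L.map fun p => (p.1, (Ty.unit p.2).applySub s))) →
      Prec Γ s.var R T

/- the relation ⪯_{𝒱,Γ} -/
inductive Preceq {S : Type} [CommRing S] (Γ : Ctx S) : Set (Bool × ℕ) → Ty S → Ty S → Prop where
  | prec : V ∩ Γ.fv = ∅ → Prec Γ X R T → Preceq Γ (V ∪ {X}) R T
  | trans : Preceq Γ V₁ A B → Preceq Γ V₂ B C → Preceq Γ (V₁ ∪ V₂) A C
  | equiv : V ∩ Γ.fv = ∅ → TEquiv R T → Preceq Γ V R T

/- the reduction relation → -/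
inductive Step {S : Type} [CommRing S] : Term S → Term S → Prop where
  -- Group E
  | oneSmul : Step (.smul 1 t) t
  | smulSmul : Step (.smul a (.smul b t)) (.smul (a*b) t)
  | smulAdd : Step (.smul a (.add t r)) (.add (.smul a t) (.smul a r))
  -- Group F
  | factor : Step (.add (.smul a t) (.smul b t)) (.smul (a+b) t)
  | factorOne : Step (.add (.smul a t) t) (.smul (a+1) t)
  | factorNone : Step (.add t t) (.smul (1+1) t)
  -- Group B
  | beta : IsBasis b → Step (.app (.lam x t) b) (t.subst x b)
  -- Group A
  | appAddL : Step (.app (.add t r) u) (.add (.app t u) (.app r u))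
  | appAddR : Step (.app t (.add r u)) (.add (.app t r) (.app t u))
  | appSmulL : Step (.app (.smul a t) r) (.smul a (.app t r))
  | appSmulR : Step (.app t (.smul a r)) (.smul a (.app t r))
  -- contextual rules
  | ctxSmul : Step t r → Step (.smul a t) (.smul a r)
  | ctxAddR : Step t r → Step (.add u t) (.add u r)
  | ctxAppR : Step t r → Step (.app u t) (.app u r)
  | ctxAppL : Step t r → Step (.app t u) (.app r u)
  | ctxLam : Step t r → Step (.lam x t) (.lam x r)

/- values: sums (in any association) of pairwise-distinct abstractions, possibly scaled -/
inductive SumOf {S : Type} : Term S → List (Term S) → Prop where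
  | leaf (t : Term S) : SumOf t [t]
  | add : SumOf t L → SumOf r M → SumOf (.add t r) (L ++ M)

inductive VEntry {S : Type} : Term S → Prop where
  | lam : VEntry (.lam x t)
  | smul : VEntry (.smul a (.lam x t))

def lamOf {S : Type} : Term S → Term S
  | .smul _ b => b
  | b => b

def IsValue {S : Type} (t : Term S) : Prop :=
  ∃ L : List (Term S), SumOf t L ∧ (∀ e ∈ L, VEntry e) ∧ (L.map lamOf).Pairwise (· ≠ ·)

/- weight of types and of terms -/
def Ty.weight {S : Type} [CommRing S] : Ty S → S
  | .unit _ => 1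
  | .gvar _ => 1
  | .smul a T => a * T.weight
  | .add T R => T.weight + R.weight

def Term.weight {S : Type} [CommRing S] : Term S → S
  | .var _ => 1
  | .lam _ _ => 1
  | .app _ _ => 1
  | .smul a t => a * t.weight
  | .add t r => t.weight + r.weight
/- ===== auxiliary machinery for the generation lemma ===== -/

/-- substitution of a unit variable preserves type equivalence -/
theorem TEquiv.substU_congr {S : Type} [CommRing S] (X : ℕ) (A : UTy S)
    {T R : Ty S} (h : TEquiv T R) : TEquiv (T.substU X A) (R.substU X A) :=
  TEquiv.rec (motive_1 := fun U V _ => UEquiv (U.substU X A) (V.substU X A))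
    (motive_2 := fun T R _ => TEquiv (T.substU X A) (R.substU X A))
    (fun _ => .refl _)
    (fun _ ih => .symm ih)
    (fun _ _ ih1 ih2 => .trans ih1 ih2)
    (fun _ _ ih1 ih2 => .arrow ih1 ih2)
    (fun {U V m} a ih => by
        by_cases hm : m = X
        · simp only [UTy.substU, if_pos hm]; exact .fallU a
        · simp only [UTy.substU, if_neg hm]; exact .fallU ih)
    (fun _ ih => .fallG ih)
    (fun _ => .refl _)
    (fun _ ih => .symm ih)
    (fun _ _ ih1 ih2 => .trans ih1 ih2)
    (fun _ ih => .unit ih)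
    (fun _ ih => .smul ih)
    (fun _ ih => .addL ih)
    (fun _ ih => .addR ih)
    (fun _ => .one_smul _)
    .smul_smul
    .smul_add
    .add_smul
    .comm
    .assoc
    h

/-- substitution of a unit variable preserves unit-type equivalence -/
theorem UEquiv.substU_congr {S : Type} [CommRing S] (X : ℕ) (A : UTy S)
    {U V : UTy S} (h : UEquiv U V) : UEquiv (U.substU X A) (V.substU X A) :=
  UEquiv.rec (motive_1 := fun U V _ => UEquiv (U.substU X A) (V.substU X A))
    (motive_2 := fun T R _ => TEquiv (T.substU X A) (R.substU X A))
    (fun _ => .refl _)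
    (fun _ ih => .symm ih)
    (fun _ _ ih1 ih2 => .trans ih1 ih2)
    (fun _ _ ih1 ih2 => .arrow ih1 ih2)
    (fun {U V m} a ih => by
        by_cases hm : m = X
        · simp only [UTy.substU, if_pos hm]; exact .fallU a
        · simp only [UTy.substU, if_neg hm]; exact .fallU ih)
    (fun _ ih => .fallG ih)
    (fun _ => .refl _)
    (fun _ ih => .symm ih)
    (fun _ _ ih1 ih2 => .trans ih1 ih2)
    (fun _ ih => .unit ih)
    (fun _ ih => .smul ih)
    (fun _ ih => .addL ih)
    (fun _ ih => .addR ih)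
    (fun _ => .one_smul _)
    .smul_smul
    .smul_add
    .add_smul
    .comm
    .assoc
    h

/-- substitution of a general variable preserves unit-type equivalence -/
theorem UEquiv.substG_congr {S : Type} [CommRing S] (X : ℕ) (A : Ty S)
    {U V : UTy S} (h : UEquiv U V) : UEquiv (U.substG X A) (V.substG X A) :=
  UEquiv.rec (motive_1 := fun U V _ => UEquiv (U.substG X A) (V.substG X A))
    (motive_2 := fun T R _ => TEquiv (T.substG X A) (R.substG X A))
    (fun _ => .refl _)
    (fun _ ih => .symm ih)
    (fun _ _ ih1 ih2 => .trans ih1 ih2)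
    (fun _ _ ih1 ih2 => .arrow ih1 ih2)
    (fun _ ih => .fallU ih)
    (fun {U V m} a ih => by
        by_cases hm : m = X
        · simp only [UTy.substG, if_pos hm]; exact .fallG a
        · simp only [UTy.substG, if_neg hm]; exact .fallG ih)
    (fun _ => .refl _)
    (fun _ ih => .symm ih)
    (fun _ _ ih1 ih2 => .trans ih1 ih2)
    (fun _ ih => .unit ih)
    (fun _ ih => .smul ih)
    (fun _ ih => .addL ih)
    (fun _ ih => .addR ih)
    (fun _ => .one_smul _)
    .smul_smul
    .smul_add
    .add_smul
    .comm
    .assoc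
    h
/-- strip one outermost ∀ of the kind of `s` and apply the substitution -/
def stripSub {S : Type} : TSub S → UTy S → UTy S
  | .u X A, .fallU m V => if m = X then V.substU X A else .fallU m V
  | .g X A, .fallG m V => if m = X then V.substG X A else .fallG m V
  | _, V => V

theorem stripSub_mkForall {S : Type} (s : TSub S) (U : UTy S) :
    stripSub s (mkForall s.var U) = U.applySub s := by
  cases s <;> simp [stripSub, mkForall, TSub.var, UTy.applySub]

theorem UEquiv.stripSub_congr {S : Type} [CommRing S] (s : TSub S)
    {U V : UTy S} (h : UEquiv U V) : UEquiv (stripSub s U) (stripSub s V) :=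
  UEquiv.rec (motive_1 := fun U V _ => UEquiv (stripSub s U) (stripSub s V))
    (motive_2 := fun _ _ _ => True)
    (fun _ => .refl _)
    (fun _ ih => .symm ih)
    (fun _ _ ih1 ih2 => .trans ih1 ih2)
    (fun a a1 _ _ => by cases s <;> exact .arrow a a1)
    (fun {U V m} a _ => by
        cases s with
        | u X A =>
          by_cases hm : m = X
          · simpa [stripSub, hm] using a.substU_congr X A
          · simpa [stripSub, hm] using UEquiv.fallU a
        | g X A => exact .fallU a)
    (fun {U V m} a _ => by
        cases s with
        | g X A =>
          by_cases hm : m = X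
          · simpa [stripSub, hm] using a.substG_congr X A
          · simpa [stripSub, hm] using UEquiv.fallG a
        | u X A => exact .fallG a)
    (fun _ => trivial) (fun _ _ => trivial) (fun _ _ _ _ => trivial)
    (fun _ _ => trivial) (fun _ _ => trivial) (fun _ _ => trivial) (fun _ _ => trivial)
    (fun _ => trivial) trivial trivial trivial trivial trivial
    h

theorem UEquiv.mkForall_congr {S : Type} [CommRing S] (X : Bool × ℕ)
    {U V : UTy S} (h : UEquiv U V) : UEquiv (mkForall X U) (mkForall X V) := by
  unfold mkForall; split
  · exact .fallG h
  · exact .fallU h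

/-- apply a function to every top-level unit type of a general type -/
def Ty.umap {S : Type} (f : UTy S → UTy S) : Ty S → Ty S
  | .unit U => .unit (f U)
  | .smul a T => .smul a (T.umap f)
  | .add T R => .add (T.umap f) (R.umap f)
  | .gvar n => .gvar n

theorem TEquiv.umap_congr {S : Type} [CommRing S] {f : UTy S → UTy S}
    (hf : ∀ {U V : UTy S}, UEquiv U V → UEquiv (f U) (f V))
    {T R : Ty S} (h : TEquiv T R) : TEquiv (T.umap f) (R.umap f) :=
  TEquiv.rec (motive_1 := fun U V _ => UEquiv (f U) (f V))
    (motive_2 := fun T R _ => TEquiv (T.umap f) (R.umap f))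
    (fun _ => hf (.refl _))
    (fun a _ => hf (.symm a))
    (fun a a1 _ _ => hf (.trans a a1))
    (fun a a1 _ _ => hf (.arrow a a1))
    (fun a _ => hf (.fallU a))
    (fun a _ => hf (.fallG a))
    (fun _ => .refl _)
    (fun _ ih => .symm ih)
    (fun _ _ ih1 ih2 => .trans ih1 ih2)
    (fun _ ih => .unit ih)
    (fun _ ih => .smul ih)
    (fun _ ih => .addL ih)
    (fun _ ih => .addR ih)
    (fun _ => .one_smul _)
    .smul_smul
    .smul_add
    .add_smul
    .comm
    .assoc
    h

theorem umap_combo {S : Type} (f : UTy S → UTy S) :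
    ∀ (M : List (S × Ty S)), (combo M).umap f = combo (M.map fun p => (p.1, p.2.umap f))
  | [] => rfl
  | [p] => rfl
  | p :: q :: M => by
      simp only [List.map_cons, combo, Ty.umap]
      rw [show (combo (q :: M)).umap f = _ from umap_combo f (q :: M)]
      simp

theorem combo_append {S : Type} [CommRing S] :
    ∀ (A B : List (S × Ty S)), A ≠ [] → B ≠ [] →
      TEquiv (combo (A ++ B)) (.add (combo A) (combo B))
  | [], _, hA, _ => absurd rfl hA
  | [p], [], _, hB => absurd rfl hB
  | [p], q :: B, _, _ => .refl _
  | p :: p' :: A, B, _, hB => by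
      have ih := combo_append (p' :: A) B (by simp) hB
      have h1 : combo ((p :: p' :: A) ++ B) =
          .add (.smul p.1 p.2) (combo ((p' :: A) ++ B)) := by
        cases A <;> rfl
      rw [h1]
      exact .trans (.addR ih) .assoc

theorem combo_smul {S : Type} [CommRing S] (a : S) :
    ∀ (L : List (S × Ty S)), L ≠ [] →
      TEquiv (.smul a (combo L)) (combo (L.map fun p => (a * p.1, p.2)))
  | [], h => absurd rfl h
  | [p], _ => .smul_smul
  | p :: q :: L, _ => by
      have ih := combo_smul a (q :: L) (by simp)
      show TEquiv (.smul a (.add (.smul p.1 p.2) (combo (q :: L)))) _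
      have h1 : TEquiv (Ty.smul a (.add (.smul p.1 p.2) (combo (q :: L))))
          (.add (.smul a (.smul p.1 p.2)) (.smul a (combo (q :: L)))) := .symm .smul_add
      refine .trans h1 (.trans (.addL .smul_smul) (.addR ih))
theorem weightOf_append {S : Type} [CommRing S] {α : Type} (A B : List (S × α)) :
    weightOf (A ++ B) = weightOf A + weightOf B := by
  simp [weightOf]

theorem weightOf_scale {S : Type} [CommRing S] {α : Type} (a : S) (L : List (S × α)) :
    weightOf (L.map fun p => (a * p.1, p.2)) = a * weightOf L := by
  induction L with
  | nil => simp [weightOf]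
  | cons p L ih => simp [weightOf, List.sum_cons, mul_add] at *; rw [ih]

theorem weightOf_map_fst {S : Type} [CommRing S] {α β : Type} (g : α → β) (L : List (S × α)) :
    weightOf (L.map fun p => (p.1, g p.2)) = weightOf L := by
  simp [weightOf, List.map_map, Function.comp_def]

/-- `Scaled c b t` : `t` is `b` under iterated scalar prefixes with product `c` -/
inductive Scaled {S : Type} [CommRing S] : S → Term S → Term S → Prop where
  | base (b : Term S) : Scaled 1 b b
  | smul : Scaled c b t → Scaled (a * c) b (.smul a t)

theorem Types.equiv' {S : Type} [CommRing S] {Γ : Ctx S} {t : Term S} {T R : Ty S}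
    (h : Types Γ t T) (e : TEquiv T R) : Types Γ t R :=
  let ⟨n, h⟩ := h; ⟨n + 1, .equiv h e⟩

theorem Types.forall_intro {S : Type} [CommRing S] {Γ : Ctx S} {t : Term S} {U : UTy S}
    {X : Bool × ℕ} (hX : X ∉ Γ.fv) (h : Types Γ t (.unit U)) :
    Types Γ t (.unit (mkForall X U)) := by
  obtain ⟨n, h⟩ := h
  have h1 : TypesN (n + 1) Γ t (combo ([(1, U)].map fun p => (p.1, Ty.unit p.2))) := by
    simpa [combo] using TypesN.equiv h (.symm (.one_smul _))
  have h2 := TypesN.fallI (X := X) [(1, U)] (by simp) hX h1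
  simp only [List.map_cons, List.map_nil, combo] at h2
  exact ⟨_, .equiv h2 (.one_smul _)⟩

theorem Types.strip_elim {S : Type} [CommRing S] {Γ : Ctx S} {t : Term S} {V : UTy S}
    (s : TSub S) (h : Types Γ t (.unit V)) : Types Γ t (.unit (stripSub s V)) := by
  obtain ⟨n, h⟩ := h
  have key : ∀ (m : ℕ) (V' : UTy S), V = mkForall s.var V' →
      Types Γ t (.unit (V'.applySub s)) := by
    intro m V' hV
    subst hV
    have h1 : TypesN (n + 1) Γ t
        (combo ([(1, V')].map fun p => (p.1, Ty.unit (mkForall s.var p.2)))) := by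
      simpa [combo] using TypesN.equiv h (.symm (.one_smul _))
    have h2 := TypesN.fallE [(1, V')] s (by simp) h1
    simp only [List.map_cons, List.map_nil, combo] at h2
    rw [show (Ty.unit V').applySub s = Ty.unit (V'.applySub s) from by cases s <;> rfl] at h2
    exact ⟨_, .equiv h2 (.one_smul _)⟩
  cases s with
  | u X A =>
    cases V with
    | fallU m V' =>
      by_cases hm : m = X
      · subst hm
        simpa [stripSub, UTy.applySub] using key m V' (by simp [mkForall, TSub.var])
      · simpa [stripSub, hm] using ⟨n, h⟩
    | uvar m => exact ⟨n, h⟩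
    | arrow U T => exact ⟨n, h⟩
    | fallG m V' => exact ⟨n, h⟩
  | g X A =>
    cases V with
    | fallG m V' =>
      by_cases hm : m = X
      · subst hm
        simpa [stripSub, UTy.applySub] using key m V' (by simp [mkForall, TSub.var])
      · simpa [stripSub, hm] using ⟨n, h⟩
    | uvar m => exact ⟨n, h⟩
    | arrow U T => exact ⟨n, h⟩
    | fallU m V' => exact ⟨n, h⟩

/-- decompose a linear combination given decompositions of each component -/
theorem combo_decomp {S : Type} [CommRing S] (Q : UTy S → Prop) (c : S) :
    ∀ (M : List (S × Ty S)), M ≠ [] →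
      (∀ p ∈ M, ∃ D : List (S × UTy S), D ≠ [] ∧
        TEquiv p.2 (combo (D.map fun q => (q.1, Ty.unit q.2))) ∧
        (∀ q ∈ D, Q q.2) ∧ weightOf D = c) →
      ∃ E : List (S × UTy S), E ≠ [] ∧
        TEquiv (combo M) (combo (E.map fun q => (q.1, Ty.unit q.2))) ∧
        (∀ q ∈ E, Q q.2) ∧ weightOf E = weightOf M * c
  | [], h, _ => absurd rfl h
  | [p], _, hall => by
      obtain ⟨D, hne, heq, hQ, hw⟩ := hall p (by simp)
      refine ⟨D.map fun q => (p.1 * q.1, q.2), by simpa using hne, ?_, ?_, ?_⟩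
      · have h1 : TEquiv (combo [p]) (.smul p.1 (combo (D.map fun q => (q.1, Ty.unit q.2)))) :=
          .smul heq
        refine h1.trans ?_
        have h2 := combo_smul p.1 (D.map fun q => (q.1, Ty.unit q.2)) (by simpa using hne)
        simpa [List.map_map, Function.comp_def] using h2
      · intro q hq; obtain ⟨q', hq', rfl⟩ := List.mem_map.1 hq; exact hQ q' hq'
      · rw [show (D.map fun q => (p.1 * q.1, q.2)) =
              ((D.map fun q => (p.1 * q.1, q.2))) from rfl, weightOf_scale, hw]
        simp [weightOf]
  | p :: p' :: M, _, hall => by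
      obtain ⟨E', hne', heq', hQ', hw'⟩ := combo_decomp Q c (p' :: M) (by simp)
        (fun q hq => hall q (by simp [hq]))
      obtain ⟨D, hne, heq, hQ, hw⟩ := hall p (by simp)
      refine ⟨(D.map fun q => (p.1 * q.1, q.2)) ++ E', by simp [hne'], ?_, ?_, ?_⟩
      · have h1 : TEquiv (combo (p :: p' :: M))
            (.add (.smul p.1 (combo (D.map fun q => (q.1, Ty.unit q.2)))) (combo (p' :: M))) :=
          .addL (.smul heq)
        have h2 := combo_smul p.1 (D.map fun q => (q.1, Ty.unit q.2)) (by simpa using hne)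
        have h3 : TEquiv (combo (p :: p' :: M))
            (.add (combo ((D.map fun q => (p.1 * q.1, q.2)).map fun q => (q.1, Ty.unit q.2)))
                  (combo (E'.map fun q => (q.1, Ty.unit q.2)))) := by
          refine h1.trans (.trans (.addL ?_) (.addR heq'))
          simpa [List.map_map, Function.comp_def] using h2
        refine h3.trans ?_
        rw [List.map_append]
        exact .symm (combo_append _ _ (by simpa using hne) (by simpa using hne'))
      · intro q hq
        rcases List.mem_append.1 hq with hq | hq
        · obtain ⟨q', hq', rfl⟩ := List.mem_map.1 hq; exact hQ q' hq'
        · exact hQ' q hq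
      · rw [weightOf_append, weightOf_scale, hw, hw', weightOf]
        simp [weightOf, add_mul]
theorem generation_master {S : Type} [CommRing S] (n : ℕ) :
    ∀ (Γ : Ctx S) (t : Term S) (T : Ty S), TypesN n Γ t T →
    ∀ (c : S) (b : Term S), IsBasis b → Scaled c b t →
    ∃ L : List (S × UTy S), L ≠ [] ∧
      TEquiv T (combo (L.map fun p => (p.1, Ty.unit p.2))) ∧
      (∀ p ∈ L, Types Γ b (Ty.unit p.2)) ∧
      weightOf L = c := by
  induction n using Nat.strong_induction_on with
  | _ n IH =>
  intro Γ t T h c b hb hs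
  cases h with
  | @ax Γ U x hx =>
    cases hs with
    | base =>
      refine ⟨[(1, U)], by simp, ?_, ?_, by simp [weightOf]⟩
      · simpa [combo] using TEquiv.symm (TEquiv.one_smul (Ty.unit U))
      · intro p hp; simp at hp; subst hp; exact ⟨1, .ax hx⟩
  | equiv h' e =>
    obtain ⟨L, hL, hEq, hTy, hw⟩ := IH _ (Nat.lt_succ_self _) _ _ _ h' c b hb hs
    exact ⟨L, hL, .trans (.symm e) hEq, hTy, hw⟩
  | @arrI n' t' T' Γ x U h' =>
    cases hs with
    | base =>
      refine ⟨[(1, .arrow U T')], by simp, ?_, ?_, by simp [weightOf]⟩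
      · simpa [combo] using TEquiv.symm (TEquiv.one_smul (Ty.unit (.arrow U T')))
      · intro p hp; simp at hp; subst hp; exact ⟨n' + 1, .arrI h'⟩
  | arrE Xs U L M hL hM hvar ht hr =>
    cases hs with
    | base => cases hb
  | addI h1 h2 =>
    cases hs with
    | base => cases hb
  | fallI L' X hL' hX h' =>
    obtain ⟨D, hD, hEq, hTy, hw⟩ := IH _ (Nat.lt_succ_self _) _ _ _ h' c b hb hs
    refine ⟨D.map fun q => (q.1, mkForall X q.2), by simpa using hD, ?_, ?_,
      by rw [weightOf_map_fst]; exact hw⟩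
    · have h2 := TEquiv.umap_congr (f := mkForall X)
        (fun h => UEquiv.mkForall_congr X h) hEq
      rw [umap_combo, umap_combo] at h2
      simpa [List.map_map, Function.comp_def, Ty.umap] using h2
    · intro q hq; obtain ⟨q', hq', rfl⟩ := List.mem_map.1 hq
      exact (hTy q' hq').forall_intro hX
  | fallE L' s hL' h' =>
    obtain ⟨D, hD, hEq, hTy, hw⟩ := IH _ (Nat.lt_succ_self _) _ _ _ h' c b hb hs
    refine ⟨D.map fun q => (q.1, stripSub s q.2), by simpa using hD, ?_, ?_,
      by rw [weightOf_map_fst]; exact hw⟩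
    · have h2 := TEquiv.umap_congr (f := stripSub s)
        (fun h => UEquiv.stripSub_congr s h) hEq
      rw [umap_combo, umap_combo] at h2
      simpa [List.map_map, Function.comp_def, Ty.umap, stripSub_mkForall,
        show ∀ (V : UTy S), (Ty.unit V).applySub s = Ty.unit (V.applySub s) from
          fun V => by cases s <;> rfl] using h2
    · intro q hq; obtain ⟨q', hq', rfl⟩ := List.mem_map.1 hq
      exact (hTy q' hq').strip_elim s
  | oneE h' =>
    obtain ⟨L, hL, hEq, hTy, hw⟩ := IH _ (Nat.lt_succ_self _) _ _ _ h' (1 * c) b hb (.smul hs)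
    rw [one_mul] at hw
    exact ⟨L, hL, hEq, hTy, hw⟩
  | @sum Γ t₀ Lsum hne hall =>
    cases hs with
    | base => cases hb
    | smul hs' =>
      rename_i c₀
      have hyp : ∀ p ∈ Lsum.map Prod.snd, ∃ D : List (S × UTy S), D ≠ [] ∧
          TEquiv p.2 (combo (D.map fun q => (q.1, Ty.unit q.2))) ∧
          (∀ q ∈ D, Types Γ b (Ty.unit q.2)) ∧ weightOf D = c₀ := by
        intro p hp
        obtain ⟨p', hp', rfl⟩ := List.mem_map.1 hp
        have hlt : p'.1 < (Lsum.map Prod.fst).sum + 1 :=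
          Nat.lt_succ_of_le (List.single_le_sum (fun _ _ => Nat.zero_le _) _
            (List.mem_map_of_mem (f := Prod.fst) hp'))
        exact IH _ hlt _ _ _ (hall p' hp') c₀ b hb hs'
      obtain ⟨E, hE, hEq, hTy, hw⟩ := combo_decomp (fun U => Types Γ b (.unit U)) c₀
        (Lsum.map Prod.snd) (by simpa using hne) hyp
      exact ⟨E, hE, hEq, hTy, hw⟩
/- STATEMENT 11: Generation lemma for basis terms -/
theorem generation_basis_terms {S : Type} [CommRing S]
    (Γ : Ctx S) (b : Term S) (T : Ty S)
    (hb : IsBasis b) (h : Types Γ b T) :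
    ∃ L : List (S × UTy S), L ≠ [] ∧
      TEquiv T (combo (L.map fun p => (p.1, Ty.unit p.2))) ∧
      (∀ p ∈ L, Types Γ b (Ty.unit p.2)) ∧
      weightOf L = 1 := by
  obtain ⟨n, h⟩ := h
  exact generation_master n Γ b T h 1 b hb (.base b)
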